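/- Let Γ be a weighted forest and let Γ' be obtained from Γ by blowing up an edge (P,Q): remove the edge (P,Q), add a new vertex R of weight -1 with edges (P,R) and (R,Q), and decrease the weights of P and Q each by 1. Then d(Γ') = d(Γ). -/

import Mathlib

open Classical Finset

/-- The matrix `Q(Γ)` of a weighted graph: `-a i` on the diagonal, `-1` for
adjacent vertices, `0` otherwise. -/
noncomputable def wMatrix {V : Type*} [Fintype V] (G : SimpleGraph V) (a : V → ℤ) :
    Matrix V V ℤ :=
  Matrix.of fun i j => if i = j then -a i else if G.Adj i j then (-1 : ℤ) else 0

/-- The determinant `d(Γ)` of a weighted graph. -/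
noncomputable def wDet {V : Type*} [Fintype V] (G : SimpleGraph V) (a : V → ℤ) : ℤ :=
  (wMatrix G a).det

/-- The determinant of the weighted graph obtained by deleting a set `s` of
vertices (and all incident edges). -/
noncomputable def wDetDel {V : Type*} [Fintype V] (G : SimpleGraph V) (a : V → ℤ)
    (s : Set V) : ℤ :=
  wDet (SimpleGraph.comap (Subtype.val : {v // v ∉ s} → V) G) (fun v => a v.1)

/-- The blow-up of a weighted graph at an edge `(P,Q)`: the edge is removed, a
new vertex `R` (of weight `-1`) is joined to both `P` and `Q`, and the weights
of `P` and `Q` each drop by `1`. -/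
def blowupEdgeGraph {V : Type*} (G : SimpleGraph V) (P Q : V) :
    SimpleGraph (V ⊕ Unit) where
  Adj x y :=
    match x, y with
    | Sum.inl u, Sum.inl v => G.Adj u v ∧ ¬((u = P ∧ v = Q) ∨ (u = Q ∧ v = P))
    | Sum.inl u, Sum.inr _ => u = P ∨ u = Q
    | Sum.inr _, Sum.inl v => v = P ∨ v = Q
    | Sum.inr _, Sum.inr _ => False
  symm := by
    constructor
    rintro (u | u) (v | v) h
    · exact ⟨G.symm.symm _ _ h.1, fun hc => h.2
        (hc.elim (fun h' => Or.inr ⟨h'.2, h'.1⟩) (fun h' => Or.inl ⟨h'.2, h'.1⟩))⟩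
    · exact h
    · exact h
    · exact h.elim
  loopless := by
    constructor
    rintro (u | u) h
    · exact G.loopless.irrefl u h.1
    · exact h.elim

/-- The weights after blowing up the edge `(P,Q)`. -/
noncomputable def blowupEdgeWeights {V : Type*} [DecidableEq V] (a : V → ℤ) (P Q : V) :
    V ⊕ Unit → ℤ :=
  Sum.elim (Function.update (Function.update a P (a P - 1)) Q (a Q - 1))
    (fun _ => (-1 : ℤ))

/-- Lemma 5.6, Case 2: the determinant of a weighted forest is preserved by
blowing up an edge. -/
theorem forest_det_blowup_edge {V : Type*} [Fintype V] [DecidableEq V]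
    (G : SimpleGraph V) (hG : G.IsAcyclic) (a : V → ℤ) (P Q : V)
    (hPQ : G.Adj P Q) :
    wDet (blowupEdgeGraph G P Q) (blowupEdgeWeights a P Q) = wDet G a := by
  classical
  have hne : P ≠ Q := hPQ.ne
  -- Blocks of the blown-up matrix
  set A : Matrix V V ℤ := Matrix.of fun i j =>
      if i = j then -(blowupEdgeWeights a P Q (Sum.inl i))
      else if (blowupEdgeGraph G P Q).Adj (Sum.inl i) (Sum.inl j) then (-1 : ℤ) else 0
    with hA
  set B : Matrix V Unit ℤ := Matrix.of fun i _ => if i = P ∨ i = Q then (-1 : ℤ) else 0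
    with hB
  set C : Matrix Unit V ℤ := Matrix.of fun _ j => if j = P ∨ j = Q then (-1 : ℤ) else 0
    with hC
  have hblock : wMatrix (blowupEdgeGraph G P Q) (blowupEdgeWeights a P Q)
      = Matrix.fromBlocks A B C 1 := by
    ext i j
    rcases i with i | i <;> rcases j with j | j
    · simp [wMatrix, hA]
    · simp only [wMatrix, Matrix.of_apply, Matrix.fromBlocks_apply₁₂, hB]
      have : (Sum.inl i : V ⊕ Unit) ≠ Sum.inr j := by simp
      rw [if_neg this]
      by_cases h : i = P ∨ i = Q
      · rw [if_pos (show (blowupEdgeGraph G P Q).Adj (Sum.inl i) (Sum.inr j) from h), if_pos h]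
      · rw [if_neg (show ¬(blowupEdgeGraph G P Q).Adj (Sum.inl i) (Sum.inr j) from h), if_neg h]
    · simp only [wMatrix, Matrix.of_apply, Matrix.fromBlocks_apply₂₁, hC]
      have : (Sum.inr i : V ⊕ Unit) ≠ Sum.inl j := by simp
      rw [if_neg this]
      by_cases h : j = P ∨ j = Q
      · rw [if_pos (show (blowupEdgeGraph G P Q).Adj (Sum.inr i) (Sum.inl j) from h), if_pos h]
      · rw [if_neg (show ¬(blowupEdgeGraph G P Q).Adj (Sum.inr i) (Sum.inl j) from h), if_neg h]
    · have : i = j := rfl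
      subst this
      simp [wMatrix, blowupEdgeWeights, show ¬(blowupEdgeGraph G P Q).Adj (Sum.inr i) (Sum.inr i)
        from (blowupEdgeGraph G P Q).loopless.irrefl _, -Sum.elim_update_left, -Sum.update_elim_inl]
  have hsub : A - B * C = wMatrix G a := by
    ext i j
    have hBC : (B * C) i j = if (i = P ∨ i = Q) ∧ (j = P ∨ j = Q) then (1 : ℤ) else 0 := by
      simp only [Matrix.mul_apply, Finset.univ_unique, Finset.sum_singleton, hB, hC,
        Matrix.of_apply]
      by_cases hi : i = P ∨ i = Q <;> by_cases hj : j = P ∨ j = Q <;>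
        simp [hi, hj]
    simp only [Matrix.sub_apply, hBC, hA, Matrix.of_apply, wMatrix, blowupEdgeWeights,
      Sum.elim_inl]
    by_cases hij : i = j
    · subst hij
      rw [if_pos rfl, if_pos rfl]
      by_cases hiP : i = P
      · rw [if_pos ⟨Or.inl hiP, Or.inl hiP⟩, hiP, Function.update_of_ne hne,
          Function.update_self]
        ring
      · by_cases hiQ : i = Q
        · rw [if_pos ⟨Or.inr hiQ, Or.inr hiQ⟩, hiQ, Function.update_self]
          ring
        · rw [if_neg (by tauto), Function.update_of_ne hiQ, Function.update_of_ne hiP]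
          ring
    · rw [if_neg hij, if_neg hij]
      by_cases hP : (i = P ∧ j = Q) ∨ (i = Q ∧ j = P)
      · have hin : (i = P ∨ i = Q) ∧ (j = P ∨ j = Q) := by tauto
        rw [if_pos hin]
        have hadj : G.Adj i j := by
          rcases hP with ⟨hi, hj⟩ | ⟨hi, hj⟩ <;> subst hi <;> subst hj
          · exact hPQ
          · exact hPQ.symm
        have : ¬(blowupEdgeGraph G P Q).Adj (Sum.inl i) (Sum.inl j) := by
          intro h; exact h.2 hP
        rw [if_neg this, if_pos hadj]; ring
      · have hnin : ¬((i = P ∨ i = Q) ∧ (j = P ∨ j = Q)) := by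
          rintro ⟨hi | hi, hj | hj⟩ <;> subst hi <;> subst hj <;> tauto
        rw [if_neg hnin]
        have hadj : (blowupEdgeGraph G P Q).Adj (Sum.inl i) (Sum.inl j) ↔ G.Adj i j := by
          constructor
          · exact fun h => h.1
          · exact fun h => ⟨h, hP⟩
        by_cases h : G.Adj i j
        · rw [if_pos (hadj.mpr h), if_pos h]; ring
        · rw [if_neg (fun hc => h (hadj.mp hc)), if_neg h]; ring
  unfold wDet
  rw [hblock]
  have h := Matrix.det_fromBlocks_one₂₂ A B C
  rw [hsub] at h
  convert h using 2
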